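/- arXiv:2212.04484 — 5 statements merged into one kernel-verified Lean document; each statement's English description precedes it below -/
import Mathlib

section
/- (Hyers stability) If g : ℝ → ℂ satisfies |g(x+y) − g(x) − g(y)| ≤ θ for all real x, y (with θ ≥ 0), then the limit G(x) := lim_{n→∞} 2^{−n} g(2^n x) exists for every x, G is additive (G(x+y) = G(x) + G(y)), and |g(x) − G(x)| ≤ θ for all x. Moreover G is the unique additive function with this property. -/
open Filter

/-- Hyers' stability theorem: if `g : ℝ → ℂ` is θ-additive, then
`G(x) = lim_{n→∞} 2^{−n} g(2^n x)` exists, `G` is additive,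
`|g(x) − G(x)| ≤ θ` for all `x`, and `G` is the unique such additive function. -/
theorem hyers_stability (θ : ℝ) (hθ : 0 ≤ θ) (g : ℝ → ℂ)
    (h : ∀ x y : ℝ, ‖g (x + y) - g x - g y‖ ≤ θ) :
    ∃ G : ℝ → ℂ,
      (∀ x y : ℝ, G (x + y) = G x + G y) ∧
      (∀ x : ℝ, ‖g x - G x‖ ≤ θ) ∧
      (∀ x : ℝ, Tendsto (fun n : ℕ => g (2 ^ n * x) / (2 ^ n : ℂ)) atTop (nhds (G x))) ∧
      (∀ G' : ℝ → ℂ, (∀ x y : ℝ, G' (x + y) = G' x + G' y) →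
        (∀ x : ℝ, ‖g x - G' x‖ ≤ θ) → G' = G) := by
  set a : ℝ → ℕ → ℂ := fun x n => g (2 ^ n * x) / (2 ^ n : ℂ) with ha
  have h2n : ∀ n : ℕ, ((2 : ℂ) ^ n) ≠ 0 := fun n => pow_ne_zero n two_ne_zero
  have habs2 : ∀ n : ℕ, ‖(2 : ℂ) ^ n‖ = 2 ^ n := by
    intro n
    rw [norm_pow]
    norm_num
  -- step bound
  have key : ∀ x (n : ℕ), ‖a x n - a x (n + 1)‖ ≤ (θ / 2) * (1 / 2) ^ n := by
    intro x n
    have e : a x n - a x (n + 1) =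
        (2 * g (2 ^ n * x) - g (2 ^ (n + 1) * x)) / 2 ^ (n + 1) := by
      simp only [ha]
      field_simp
      ring
    have hb : ‖2 * g (2 ^ n * x) - g (2 ^ (n + 1) * x)‖ ≤ θ := by
      have e2 : (2 : ℝ) ^ (n + 1) * x = 2 ^ n * x + 2 ^ n * x := by ring
      have := h (2 ^ n * x) (2 ^ n * x)
      rw [e2]
      calc ‖2 * g (2 ^ n * x) - g (2 ^ n * x + 2 ^ n * x)‖
          = ‖g (2 ^ n * x + 2 ^ n * x) - g (2 ^ n * x) - g (2 ^ n * x)‖ := by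
            rw [← norm_neg]
            ring_nf
        _ ≤ θ := this
    rw [e, norm_div, habs2]
    rw [div_le_iff₀ (by positivity)]
    have h1 : ((1:ℝ)/2) ^ n * 2 ^ n = 1 := by rw [← mul_pow]; norm_num
    calc ‖2 * g (2 ^ n * x) - g (2 ^ (n + 1) * x)‖ ≤ θ := hb
      _ = θ / 2 * (1 / 2) ^ n * 2 ^ (n + 1) := by
          rw [pow_succ]
          linear_combination (-θ) * h1
  -- Cauchy, hence limit exists
  have hcauchy : ∀ x, CauchySeq (a x) := by
    intro x
    apply cauchySeq_of_le_geometric (1 / 2) (θ / 2) (by norm_num)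
    intro n
    rw [dist_eq_norm]
    exact key x n
  have hlim : ∀ x, ∃ L, Tendsto (a x) atTop (nhds L) :=
    fun x => cauchySeq_tendsto_of_complete (hcauchy x)
  choose G hG using hlim
  -- partial sums bound
  have hbound : ∀ x (n : ℕ), ‖g x - a x n‖ ≤ θ * (1 - (1 / 2) ^ n) := by
    intro x n
    induction n with
    | zero =>
      simp [ha]
    | succ n ih =>
      calc ‖g x - a x (n + 1)‖
          = ‖(g x - a x n) + (a x n - a x (n + 1))‖ := by ring_nf
        _ ≤ ‖g x - a x n‖ + ‖a x n - a x (n + 1)‖ :=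
            norm_add_le _ _
        _ ≤ θ * (1 - (1 / 2) ^ n) + θ / 2 * (1 / 2) ^ n := add_le_add ih (key x n)
        _ = θ * (1 - (1 / 2) ^ (n + 1)) := by ring
  have hθbound : ∀ x, ‖g x - G x‖ ≤ θ := by
    intro x
    have ht : Tendsto (fun n => ‖g x - a x n‖) atTop
        (nhds (‖g x - G x‖)) :=
      (continuous_norm.tendsto _).comp (tendsto_const_nhds.sub (hG x))
    refine le_of_tendsto ht (Eventually.of_forall fun n => ?_)
    calc ‖g x - a x n‖ ≤ θ * (1 - (1 / 2) ^ n) := hbound x n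
      _ ≤ θ * 1 := by
          apply mul_le_mul_of_nonneg_left _ hθ
          have : (0:ℝ) ≤ (1/2:ℝ) ^ n := by positivity
          linarith
      _ = θ := mul_one θ
  -- additivity
  have hadd : ∀ x y : ℝ, G (x + y) = G x + G y := by
    intro x y
    have T1 : Tendsto (fun n => a (x + y) n - a x n - a y n) atTop
        (nhds (G (x + y) - G x - G y)) := ((hG (x + y)).sub (hG x)).sub (hG y)
    have T2 : Tendsto (fun n => a (x + y) n - a x n - a y n) atTop (nhds 0) := by
      rw [tendsto_zero_iff_norm_tendsto_zero]
      have hle : ∀ n : ℕ, ‖a (x + y) n - a x n - a y n‖ ≤ θ * (1 / 2) ^ n := by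
        intro n
        have e : a (x + y) n - a x n - a y n =
            (g (2 ^ n * x + 2 ^ n * y) - g (2 ^ n * x) - g (2 ^ n * y)) / 2 ^ n := by
          simp only [ha]
          rw [mul_add]
          field_simp
        rw [e, norm_div, habs2]
        rw [div_le_iff₀ (by positivity)]
        calc ‖g (2 ^ n * x + 2 ^ n * y) - g (2 ^ n * x) - g (2 ^ n * y)‖ ≤ θ :=
            h _ _
          _ = θ * (1 / 2) ^ n * 2 ^ n := by
              have h1 : ((1:ℝ)/2) ^ n * 2 ^ n = 1 := by rw [← mul_pow]; norm_num
              linear_combination (-θ) * h1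
      have T3 : Tendsto (fun n : ℕ => θ * (1 / 2) ^ n) atTop (nhds 0) := by
        have := tendsto_pow_atTop_nhds_zero_of_lt_one (by norm_num : (0:ℝ) ≤ 1/2)
          (by norm_num : (1/2:ℝ) < 1)
        simpa using this.const_mul θ
      exact squeeze_zero (fun n => norm_nonneg _) hle T3
    have := tendsto_nhds_unique T1 T2
    linear_combination this
  refine ⟨G, hadd, hθbound, hG, ?_⟩
  -- uniqueness
  intro G' hG'add hG'θ
  have hdouble : ∀ x : ℝ, ∀ n : ℕ, G' (2 ^ n * x) = 2 ^ n * G' x := by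
    intro x n
    induction n with
    | zero => simp
    | succ n ih =>
      have e2 : (2 : ℝ) ^ (n + 1) * x = 2 ^ n * x + 2 ^ n * x := by ring
      rw [e2, hG'add, ih]
      ring
  funext x
  have T : Tendsto (a x) atTop (nhds (G' x)) := by
    rw [← tendsto_sub_nhds_zero_iff, tendsto_zero_iff_norm_tendsto_zero]
    have hle : ∀ n : ℕ, ‖a x n - G' x‖ ≤ θ * (1 / 2) ^ n := by
      intro n
      have e : a x n - G' x = (g (2 ^ n * x) - G' (2 ^ n * x)) / 2 ^ n := by
        rw [hdouble x n]
        simp only [ha]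
        field_simp
      rw [e, norm_div, habs2, div_le_iff₀ (by positivity)]
      calc ‖g (2 ^ n * x) - G' (2 ^ n * x)‖ ≤ θ := hG'θ _
        _ = θ * (1 / 2) ^ n * 2 ^ n := by
            have h1 : ((1:ℝ)/2) ^ n * 2 ^ n = 1 := by rw [← mul_pow]; norm_num
            linear_combination (-θ) * h1
    have T3 : Tendsto (fun n : ℕ => θ * (1 / 2) ^ n) atTop (nhds 0) := by
      have := tendsto_pow_atTop_nhds_zero_of_lt_one (by norm_num : (0:ℝ) ≤ 1/2)
        (by norm_num : (1/2:ℝ) < 1)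
      simpa using this.const_mul θ
    exact squeeze_zero (fun n => norm_nonneg _) hle T3
  exact tendsto_nhds_unique T (hG x)
end

section
/- If g : ℝ≥0 → ℂ is θ-additive on the nonnegative reals (i.e., |g(x+y) − g(x) − g(y)| ≤ θ for all x, y ≥ 0), then there exists an additive function G : ℝ → ℂ such that |g(x) − G(x)| ≤ θ for all x ≥ 0. -/
open Filter Topology

/-- If `g` is θ-additive on the nonnegative reals, then there is an additive
function `G : ℝ → ℂ` with `|g(x) − G(x)| ≤ θ` for all `x ≥ 0`. -/
theorem hyers_stability_nonneg (θ : ℝ) (hθ : 0 ≤ θ) (g : ℝ → ℂ)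
    (h : ∀ x y : ℝ, 0 ≤ x → 0 ≤ y →
      ‖g (x + y) - g x - g y‖ ≤ θ) :
    ∃ G : ℝ → ℂ,
      (∀ x y : ℝ, G (x + y) = G x + G y) ∧
      (∀ x : ℝ, 0 ≤ x → ‖g x - G x‖ ≤ θ) := by
  classical
  set a : ℝ → ℕ → ℂ := fun x n => g (2 ^ n * x) / (2 : ℂ) ^ n with ha
  have hstep : ∀ x : ℝ, 0 ≤ x → ∀ n : ℕ,
      dist (a x n) (a x (n + 1)) ≤ θ / 2 / 2 ^ n := by
    intro x hx n
    have hx' : (0 : ℝ) ≤ 2 ^ n * x := by positivity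
    have h2 := h (2 ^ n * x) (2 ^ n * x) hx' hx'
    have key : a x n - a x (n + 1) =
        -((g (2 ^ n * x + 2 ^ n * x) - g (2 ^ n * x) - g (2 ^ n * x)) / (2 : ℂ) ^ (n + 1)) := by
      have h2x : (2 : ℝ) ^ (n + 1) * x = 2 ^ n * x + 2 ^ n * x := by ring
      have hne : ((2 : ℂ) ^ (n + 1)) ≠ 0 := pow_ne_zero _ two_ne_zero
      have hne' : ((2 : ℂ) ^ n) ≠ 0 := pow_ne_zero _ two_ne_zero
      rw [ha]
      simp only [h2x]
      field_simp
      ring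
    rw [dist_eq_norm, key]
    rw [norm_neg, norm_div]
    have hnorm : ‖g (2 ^ n * x + 2 ^ n * x) - g (2 ^ n * x) - g (2 ^ n * x)‖ ≤ θ := h2
    have hden : ‖((2 : ℂ) ^ (n + 1))‖ = 2 ^ (n + 1) := by
      rw [norm_pow, Complex.norm_ofNat]
    rw [hden]
    rw [div_le_iff₀ (by positivity)]
    have h2n : ((2 : ℝ) ^ n) ≠ 0 := by positivity
    have heq : θ / 2 / 2 ^ n * 2 ^ (n + 1) = θ := by
      rw [pow_succ, div_div, mul_comm ((2:ℝ)) (2 ^ n), ← div_div, mul_comm ((2:ℝ)^n) 2,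
        ← mul_assoc, div_mul_cancel₀ _ (two_ne_zero), div_mul_cancel₀ _ h2n]
    linarith
  have hcau : ∀ x : ℝ, 0 ≤ x → CauchySeq (a x) := fun x hx =>
    cauchySeq_of_le_geometric_two (hstep x hx)
  set G₀ : ℝ → ℂ := fun x => limUnder atTop (a x) with hG₀
  have htend : ∀ x : ℝ, 0 ≤ x → Tendsto (a x) atTop (𝓝 (G₀ x)) := fun x hx =>
    (hcau x hx).tendsto_limUnder
  -- bound
  have hbound : ∀ x : ℝ, 0 ≤ x → ‖g x - G₀ x‖ ≤ θ := by
    intro x hx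
    have := dist_le_of_le_geometric_two_of_tendsto₀ (hstep x hx) (htend x hx)
    have h0 : a x 0 = g x := by simp [ha]
    rw [h0, dist_eq_norm] at this
    exact this
  -- additivity on nonneg
  have hadd₀ : ∀ x y : ℝ, 0 ≤ x → 0 ≤ y → G₀ (x + y) = G₀ x + G₀ y := by
    intro x y hx hy
    have hxy : (0 : ℝ) ≤ x + y := by linarith
    have hdiff : Tendsto (fun n => a (x + y) n - a x n - a y n) atTop (𝓝 0) := by
      apply squeeze_zero_norm (a := fun n => θ / 2 ^ n)
      · intro n
        have hx' : (0 : ℝ) ≤ 2 ^ n * x := by positivity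
        have hy' : (0 : ℝ) ≤ 2 ^ n * y := by positivity
        have hn := h (2 ^ n * x) (2 ^ n * y) hx' hy'
        have key : a (x + y) n - a x n - a y n =
            (g (2 ^ n * x + 2 ^ n * y) - g (2 ^ n * x) - g (2 ^ n * y)) / (2 : ℂ) ^ n := by
          have hxy2 : (2 : ℝ) ^ n * (x + y) = 2 ^ n * x + 2 ^ n * y := by ring
          rw [ha]
          simp only [hxy2]
          ring
        rw [key, norm_div, norm_pow, Complex.norm_ofNat]
        exact div_le_div_of_nonneg_right hn (by positivity) |>.trans_eq rfl
      · have : Tendsto (fun n : ℕ => θ * (1 / 2 : ℝ) ^ n) atTop (𝓝 0) := by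
          simpa using
            (tendsto_pow_atTop_nhds_zero_of_lt_one (by norm_num) (by norm_num : (1/2:ℝ) < 1)).const_mul θ
        refine this.congr fun n => ?_
        rw [div_pow, one_pow, mul_one_div]
    have h1 : Tendsto (fun n => a x n + a y n) atTop (𝓝 (G₀ x + G₀ y)) :=
      (htend x hx).add (htend y hy)
    have h2 : Tendsto (a (x + y)) atTop (𝓝 (G₀ x + G₀ y)) := by
      have := hdiff.add h1
      simpa using this.congr fun n => by ring
    exact tendsto_nhds_unique (htend (x + y) hxy) h2
  have hG00 : G₀ 0 = 0 := by
    have := hadd₀ 0 0 le_rfl le_rfl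
    simp at this
    exact this
  -- extend
  refine ⟨fun x => if 0 ≤ x then G₀ x else -G₀ (-x), ?_, ?_⟩
  · intro x y
    rcases le_or_gt 0 x with hx | hx <;> rcases le_or_gt 0 y with hy | hy <;>
      rcases le_or_gt 0 (x + y) with hxy | hxy
    · simp only [if_pos hx, if_pos hy, if_pos hxy]; exact hadd₀ x y hx hy
    · linarith
    · -- x ≥ 0, y < 0, x+y ≥ 0 : x = (x+y) + (-y)
      simp only [if_pos hx, if_neg (not_le.mpr hy), if_pos hxy]
      have := hadd₀ (x + y) (-y) hxy (by linarith)
      simp only [add_neg_cancel_right] at this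
      rw [this]; ring
    · -- x ≥ 0, y < 0, x+y < 0 : -y = x + (-(x+y))
      simp only [if_pos hx, if_neg (not_le.mpr hy), if_neg (not_le.mpr hxy)]
      have := hadd₀ x (-(x + y)) hx (by linarith)
      have e : x + -(x + y) = -y := by ring
      rw [e] at this
      rw [this]; ring
    · -- x < 0, y ≥ 0, x+y ≥ 0 : y = (x+y) + (-x)
      simp only [if_neg (not_le.mpr hx), if_pos hy, if_pos hxy]
      have := hadd₀ (x + y) (-x) hxy (by linarith)
      have e : x + y + -x = y := by ring
      rw [e] at this
      rw [this]; ring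
    · -- x < 0, y ≥ 0, x+y < 0 : -x = y + (-(x+y))
      simp only [if_neg (not_le.mpr hx), if_pos hy, if_neg (not_le.mpr hxy)]
      have := hadd₀ y (-(x + y)) hy (by linarith)
      have e : y + -(x + y) = -x := by ring
      rw [e] at this
      rw [this]; ring
    · linarith
    · -- x < 0, y < 0 : -(x+y) = -x + -y
      simp only [if_neg (not_le.mpr hx), if_neg (not_le.mpr hy), if_neg (not_le.mpr hxy)]
      have := hadd₀ (-x) (-y) (by linarith) (by linarith)
      have e : -x + -y = -(x + y) := by ring
      rw [e] at this
      rw [this]; ring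
  · intro x hx
    simp only [if_pos hx]
    exact hbound x hx
end

section
/- (Skof local stability) Let T > 0 and let g : [−T, T) → ℂ satisfy |g(x+y) − g(x) − g(y)| ≤ θ whenever x, y, x+y all lie in [−T, T). Then there exists an additive function G : ℝ → ℂ with |g(x) − G(x)| ≤ 3θ for all x ∈ [−T, T). -/
/-- Skof's local stability: if `g` is θ-additive on `[−T, T)`, then there is
an additive `G : ℝ → ℂ` with `|g(x) − G(x)| ≤ 3θ` on `[−T, T)`. -/
theorem skof_local_stability (T θ : ℝ) (hT : 0 < T) (hθ : 0 ≤ θ) (g : ℝ → ℂ)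
    (h : ∀ x y : ℝ, x ∈ Set.Ico (-T) T → y ∈ Set.Ico (-T) T →
      x + y ∈ Set.Ico (-T) T → ‖g (x + y) - g x - g y‖ ≤ θ) :
    ∃ G : ℝ → ℂ,
      (∀ x y : ℝ, G (x + y) = G x + G y) ∧
      (∀ x ∈ Set.Ico (-T) T, ‖g x - G x‖ ≤ 3 * θ) := by
  have h2T : (0:ℝ) < 2*T := by linarith
  set N : ℝ → ℤ := fun x => ⌊(x+T)/(2*T)⌋ with hNdef
  set R : ℝ → ℝ := fun x => x - 2*(N x)*T with hRdef
  have hx_eq : ∀ x : ℝ, x = 2*(N x : ℝ)*T + R x := by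
    intro x; simp only [hRdef]; ring
  have hRD : ∀ x : ℝ, R x ∈ Set.Ico (-T) T := by
    intro x
    have h1 : ((N x : ℝ)) * (2*T) ≤ x + T := (le_div_iff₀ h2T).mp (Int.floor_le _)
    have h2 : x + T < ((N x : ℝ) + 1) * (2*T) := (div_lt_iff₀ h2T).mp (Int.lt_floor_add_one _)
    constructor
    · simp only [hRdef]; nlinarith
    · simp only [hRdef]; nlinarith
  have hNval : ∀ (k : ℤ) (r : ℝ), r ∈ Set.Ico (-T) T → N (2*(k:ℝ)*T + r) = k := by
    intro k r hr
    simp only [hNdef]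
    rw [Int.floor_eq_iff]
    constructor
    · rw [le_div_iff₀ h2T]; nlinarith [hr.1]
    · rw [div_lt_iff₀ h2T]; push_cast; nlinarith [hr.2]
  set f : ℝ → ℂ := fun x => g (R x) - 2*((N x : ℤ) : ℂ) * g (-T) with hfdef
  have hfval : ∀ (k : ℤ) (r : ℝ), r ∈ Set.Ico (-T) T →
      f (2*(k:ℝ)*T + r) = g r - 2*((k : ℤ) : ℂ) * g (-T) := by
    intro k r hr
    have hN := hNval k r hr
    have hR : R (2*(k:ℝ)*T + r) = r := by
      simp only [hRdef, hN]; ring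
    simp only [hfdef, hR, hN]
  have hmemT : (-T) ∈ Set.Ico (-T) T := ⟨le_refl _, by linarith⟩
  have key : ∀ x y : ℝ, ‖f (x+y) - f x - f y‖ ≤ 3*θ := by
    intro x y
    obtain ⟨hr1, hr2⟩ := hRD x
    obtain ⟨hs1, hs2⟩ := hRD y
    have hex := hx_eq x
    have hey := hx_eq y
    rcases le_or_gt (-T) (R x + R y) with hge | hlt
    · rcases lt_or_ge (R x + R y) T with hlt2 | hge2
      · -- middle case
        have hxy : x + y = 2*(((N x) + (N y) : ℤ) : ℝ)*T + (R x + R y) := by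
          push_cast; linarith
        have hf3 : f (x+y) = g (R x + R y) - 2*(((N x) + (N y) : ℤ) : ℂ) * g (-T) := by
          rw [hxy]; exact hfval _ _ ⟨hge, hlt2⟩
        have heq : f (x+y) - f x - f y = g (R x + R y) - g (R x) - g (R y) := by
          rw [hf3]; simp only [hfdef]; push_cast; ring
        rw [heq]
        have := h (R x) (R y) ⟨hr1, hr2⟩ ⟨hs1, hs2⟩ ⟨hge, hlt2⟩
        linarith
      · -- upper wrap case : T ≤ R x + R y
        have hrpos : 0 < R x := by linarith
        have hspos : 0 < R y := by linarith
        have hxy : x + y = 2*(((N x) + (N y) + 1 : ℤ) : ℝ)*T + (R x + R y - 2*T) := by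
          push_cast; linarith
        have hf3 : f (x+y) = g (R x + R y - 2*T) - 2*(((N x) + (N y) + 1 : ℤ) : ℂ) * g (-T) := by
          rw [hxy]; exact hfval _ _ ⟨by linarith, by linarith⟩
        have e1 := h (R x) (-T) ⟨hr1, hr2⟩ hmemT ⟨by linarith, by linarith⟩
        have e2 := h (R y) (-T) ⟨hs1, hs2⟩ hmemT ⟨by linarith, by linarith⟩
        have e3 := h (R x - T) (R y - T) ⟨by linarith, by linarith⟩ ⟨by linarith, by linarith⟩
          ⟨by linarith, by linarith⟩
        have ha1 : R x + -T = R x - T := by ring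
        have ha2 : R y + -T = R y - T := by ring
        have ha3 : (R x - T) + (R y - T) = R x + R y - 2*T := by ring
        rw [ha1] at e1; rw [ha2] at e2; rw [ha3] at e3
        have hsplit : f (x+y) - f x - f y =
            (g (R x + R y - 2*T) - g (R x - T) - g (R y - T))
            + (g (R x - T) - g (R x) - g (-T)) + (g (R y - T) - g (R y) - g (-T)) := by
          rw [hf3]; simp only [hfdef]; push_cast; ring
        rw [hsplit]
        calc ‖_ + _ + _‖
            ≤ ‖(g (R x + R y - 2*T) - g (R x - T) - g (R y - T))
              + (g (R x - T) - g (R x) - g (-T))‖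
              + ‖g (R y - T) - g (R y) - g (-T)‖ := norm_add_le _ _
          _ ≤ ‖g (R x + R y - 2*T) - g (R x - T) - g (R y - T)‖
              + ‖g (R x - T) - g (R x) - g (-T)‖
              + ‖g (R y - T) - g (R y) - g (-T)‖ := by
                have := norm_add_le (g (R x + R y - 2*T) - g (R x - T) - g (R y - T))
                  (g (R x - T) - g (R x) - g (-T))
                linarith
          _ ≤ 3*θ := by linarith
    · -- lower wrap case : R x + R y < -T
      have hrneg : R x < 0 := by linarith
      have hsneg : R y < 0 := by linarith
      have hxy : x + y = 2*(((N x) + (N y) - 1 : ℤ) : ℝ)*T + (R x + R y + 2*T) := by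
        push_cast; linarith
      have hf3 : f (x+y) = g (R x + R y + 2*T) - 2*(((N x) + (N y) - 1 : ℤ) : ℂ) * g (-T) := by
        rw [hxy]; exact hfval _ _ ⟨by linarith, by linarith⟩
      have e1 := h (R x + T) (-T) ⟨by linarith, by linarith⟩ hmemT ⟨by linarith, by linarith⟩
      have e2 := h (R y + T) (-T) ⟨by linarith, by linarith⟩ hmemT ⟨by linarith, by linarith⟩
      have e3 := h (R x + T) (R y + T) ⟨by linarith, by linarith⟩ ⟨by linarith, by linarith⟩
        ⟨by linarith, by linarith⟩
      have ha1 : R x + T + -T = R x := by ring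
      have ha2 : R y + T + -T = R y := by ring
      have ha3 : (R x + T) + (R y + T) = R x + R y + 2*T := by ring
      rw [ha1] at e1; rw [ha2] at e2; rw [ha3] at e3
      have e1' : ‖g (R x + T) + g (-T) - g (R x)‖ ≤ θ := by
        have heq : g (R x + T) + g (-T) - g (R x) = -(g (R x) - g (R x + T) - g (-T)) := by ring
        rw [heq, norm_neg]; exact e1
      have e2' : ‖g (R y + T) + g (-T) - g (R y)‖ ≤ θ := by
        have heq : g (R y + T) + g (-T) - g (R y) = -(g (R y) - g (R y + T) - g (-T)) := by ring
        rw [heq, norm_neg]; exact e2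
      have hsplit : f (x+y) - f x - f y =
          (g (R x + R y + 2*T) - g (R x + T) - g (R y + T))
          + (g (R x + T) + g (-T) - g (R x)) + (g (R y + T) + g (-T) - g (R y)) := by
        rw [hf3]; simp only [hfdef]; push_cast; ring
      rw [hsplit]
      calc ‖_ + _ + _‖
          ≤ ‖(g (R x + R y + 2*T) - g (R x + T) - g (R y + T))
            + (g (R x + T) + g (-T) - g (R x))‖
            + ‖g (R y + T) + g (-T) - g (R y)‖ := norm_add_le _ _
        _ ≤ ‖g (R x + R y + 2*T) - g (R x + T) - g (R y + T)‖
            + ‖g (R x + T) + g (-T) - g (R x)‖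
            + ‖g (R y + T) + g (-T) - g (R y)‖ := by
              have := norm_add_le (g (R x + R y + 2*T) - g (R x + T) - g (R y + T))
                (g (R x + T) + g (-T) - g (R x))
              linarith
        _ ≤ 3*θ := by linarith
  -- Hyers part
  set u : ℝ → ℕ → ℂ := fun x n => f (2^n * x) / 2^n with hudef
  have hdouble : ∀ z : ℝ, ‖f (2*z) - 2 * f z‖ ≤ 3*θ := by
    intro z
    have hk := key z z
    have hz : z + z = 2*z := by ring
    rw [hz] at hk
    have heq : f (2*z) - 2 * f z = f (2*z) - f z - f z := by ring
    rw [heq]; exact hk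
  have hstep : ∀ (x : ℝ) (n : ℕ), dist (u x n) (u x (n+1)) ≤ (3*θ/2) * (1/2)^n := by
    intro x n
    have h2n : ((2:ℂ)^(n+1)) ≠ 0 := pow_ne_zero _ two_ne_zero
    have harg : (2:ℝ)^(n+1) * x = 2 * (2^n * x) := by ring
    have hval : u x n - u x (n+1) = (2 * f (2^n * x) - f (2 * (2^n * x))) / 2^(n+1) := by
      simp only [hudef, harg]
      field_simp
      ring
    rw [Complex.dist_eq, hval]
    rw [norm_div]
    have habs2 : ‖(2:ℂ)^(n+1)‖ = 2^(n+1) := by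
      rw [norm_pow, Complex.norm_two]
    rw [habs2]
    have hnum : ‖2 * f (2^n * x) - f (2 * (2^n * x))‖ ≤ 3*θ := by
      have := hdouble (2^n * x)
      have heq : ‖2 * f (2^n * x) - f (2 * (2^n * x))‖
          = ‖f (2 * (2^n * x)) - 2 * f (2^n * x)‖ := by
        rw [← norm_neg]; congr 1; ring
      rw [heq]; exact this
    rw [div_le_iff₀ (by positivity)]
    calc ‖2 * f (2^n * x) - f (2 * (2^n * x))‖ ≤ 3*θ := hnum
      _ = (3*θ/2) * (1/2)^n * 2^(n+1) := by
          have h1 : ((1:ℝ)/2)^n * 2^n = 1 := by rw [← mul_pow]; norm_num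
          calc (3*θ:ℝ) = 3*θ * ((1/2)^n * 2^n) := by rw [h1, mul_one]
            _ = (3*θ/2) * (1/2)^n * 2^(n+1) := by rw [pow_succ]; ring
  have hcauchy : ∀ x : ℝ, ∃ l : ℂ, Filter.Tendsto (u x) Filter.atTop (nhds l) := by
    intro x
    have : CauchySeq (u x) := cauchySeq_of_le_geometric (1/2) (3*θ/2) (by norm_num) (hstep x)
    exact cauchySeq_tendsto_of_complete this
  choose G hG using hcauchy
  refine ⟨G, ?_, ?_⟩
  · intro x y
    have hzero : Filter.Tendsto (fun n : ℕ => u (x+y) n - (u x n + u y n))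
        Filter.atTop (nhds 0) := by
      apply squeeze_zero_norm (a := fun n : ℕ => (3*θ) * (1/2)^n)
      · intro n
        have harg : (2:ℝ)^n * (x + y) = 2^n * x + 2^n * y := by ring
        have hval : u (x+y) n - (u x n + u y n)
            = (f (2^n * x + 2^n * y) - f (2^n * x) - f (2^n * y)) / 2^n := by
          simp only [hudef, harg]
          field_simp
          ring
        rw [hval]
        rw [norm_div]
        have habs2 : ‖(2:ℂ)^n‖ = 2^n := by rw [norm_pow, Complex.norm_two]
        rw [habs2, div_le_iff₀ (by positivity)]
        calc ‖f (2^n * x + 2^n * y) - f (2^n * x) - f (2^n * y)‖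
            ≤ 3*θ := key _ _
          _ = 3*θ * (1/2)^n * 2^n := by
              have h1 : ((1:ℝ)/2)^n * 2^n = 1 := by rw [← mul_pow]; norm_num
              calc (3*θ:ℝ) = 3*θ * ((1/2)^n * 2^n) := by rw [h1, mul_one]
                _ = 3*θ * (1/2)^n * 2^n := by ring
      · have := tendsto_pow_atTop_nhds_zero_of_lt_one (by norm_num : (0:ℝ) ≤ 1/2)
          (by norm_num : (1:ℝ)/2 < 1)
        have h0 : (3*θ) * (0:ℝ) = 0 := by ring
        simpa [h0] using this.const_mul (3*θ)
    have hlim : Filter.Tendsto (fun n : ℕ => u (x+y) n - (u x n + u y n))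
        Filter.atTop (nhds (G (x+y) - (G x + G y))) := (hG (x+y)).sub ((hG x).add (hG y))
    have := tendsto_nhds_unique hlim hzero
    have : G (x+y) - (G x + G y) = 0 := this
    linear_combination this
  · intro x hx
    have hfx : f x = g x := by
      have hv := hfval 0 x hx
      have harg : 2*((0:ℤ):ℝ)*T + x = x := by push_cast; ring
      rw [harg] at hv
      simpa using hv
    have hu0 : u x 0 = f x := by simp [hudef]
    have hdist := dist_le_of_le_geometric_of_tendsto₀ (1/2) (3*θ/2)
      (by norm_num : (1:ℝ)/2 < 1) (hstep x) (hG x)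
    rw [hu0, hfx, Complex.dist_eq] at hdist
    calc ‖g x - G x‖ ≤ (3*θ/2) / (1 - 1/2) := hdist
      _ = 3 * θ := by ring
end

section
/- (Klebanov doubling identity) Suppose X₁ and X₂ are independent ℝ^d-valued random vectors such that |f_{X₁+X₂, X₁−X₂}(t₁,t₂) − f_{X₁+X₂}(t₁) f_{X₁−X₂}(t₂)| ≤ ε for all ‖t₁‖₁ ≤ T, ‖t₂‖₁ ≤ T. Then for each i ∈ {1,2} and all t with ‖t‖₁ ≤ T: |f_i(2t) − f_i(t)² |f_i(t)|²| ≤ 5ε, where f_i is the characteristic function of X_i. -/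
open MeasureTheory ProbabilityTheory

/-- The characteristic function `f_X(t) = E[exp(i tᵀ X)]`. -/
noncomputable def charFun' {Ω : Type*} [MeasurableSpace Ω] (μ : Measure Ω) {d : ℕ}
    (X : Ω → EuclideanSpace ℝ (Fin d)) (t : EuclideanSpace ℝ (Fin d)) : ℂ :=
  ∫ ω, Complex.exp (Complex.I * ((inner ℝ t (X ω) : ℝ) : ℂ)) ∂μ

/-- The joint characteristic function `f_{U,V}(t₁,t₂) = E[exp(i t₁ᵀU + i t₂ᵀV)]`. -/
noncomputable def jointCharFun' {Ω : Type*} [MeasurableSpace Ω] (μ : Measure Ω) {d : ℕ}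
    (U V : Ω → EuclideanSpace ℝ (Fin d))
    (t₁ t₂ : EuclideanSpace ℝ (Fin d)) : ℂ :=
  ∫ ω, Complex.exp (Complex.I * ((inner ℝ t₁ (U ω) + inner ℝ t₂ (V ω) : ℝ) : ℂ)) ∂μ

section Helpers

variable {Ω : Type*} [MeasurableSpace Ω] {μ : Measure Ω} [IsProbabilityMeasure μ] {d : ℕ}

lemma exp_meas' (a : EuclideanSpace ℝ (Fin d)) :
    StronglyMeasurable (fun x : EuclideanSpace ℝ (Fin d) =>
      Complex.exp (Complex.I * ((inner ℝ a x : ℝ) : ℂ))) := by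
  refine Continuous.stronglyMeasurable ?_
  exact Complex.continuous_exp.comp (continuous_const.mul
    (Complex.continuous_ofReal.comp (continuous_const.inner continuous_id)))

lemma indep_exp_mul' (X Y : Ω → EuclideanSpace ℝ (Fin d))
    (hX : Measurable X) (hY : Measurable Y) (hind : IndepFun X Y μ)
    (a b : EuclideanSpace ℝ (Fin d)) :
    ∫ ω, Complex.exp (Complex.I * ((inner ℝ a (X ω) : ℝ) : ℂ))
        * Complex.exp (Complex.I * ((inner ℝ b (Y ω) : ℝ) : ℂ)) ∂μ
      = charFun' μ X a * charFun' μ Y b := by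
  have hmap := (indepFun_iff_map_prod_eq_prod_map_map hX.aemeasurable hY.aemeasurable).mp hind
  have h1 : ∫ ω, Complex.exp (Complex.I * ((inner ℝ a (X ω) : ℝ) : ℂ))
        * Complex.exp (Complex.I * ((inner ℝ b (Y ω) : ℝ) : ℂ)) ∂μ
      = ∫ p : EuclideanSpace ℝ (Fin d) × EuclideanSpace ℝ (Fin d),
          Complex.exp (Complex.I * ((inner ℝ a p.1 : ℝ) : ℂ))
            * Complex.exp (Complex.I * ((inner ℝ b p.2 : ℝ) : ℂ))
          ∂(μ.map (fun ω => (X ω, Y ω))) := by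
    rw [integral_map (hX.prodMk hY).aemeasurable]
    exact (((exp_meas' a).comp_measurable measurable_fst).mul
      ((exp_meas' b).comp_measurable measurable_snd)).aestronglyMeasurable
  rw [h1, hmap,
    integral_prod_mul
      (f := fun x : EuclideanSpace ℝ (Fin d) => Complex.exp (Complex.I * ((inner ℝ a x : ℝ) : ℂ)))
      (g := fun y : EuclideanSpace ℝ (Fin d) => Complex.exp (Complex.I * ((inner ℝ b y : ℝ) : ℂ))),
    charFun', charFun',
    integral_map hX.aemeasurable (exp_meas' a).aestronglyMeasurable,
    integral_map hY.aemeasurable (exp_meas' b).aestronglyMeasurable]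

omit [IsProbabilityMeasure μ] in
lemma charFun'_neg (X : Ω → EuclideanSpace ℝ (Fin d)) (t : EuclideanSpace ℝ (Fin d)) :
    charFun' μ X (-t) = (starRingEnd ℂ) (charFun' μ X t) := by
  rw [charFun', charFun', ← integral_conj]
  congr 1; ext ω
  rw [← Complex.exp_conj]
  congr 1
  simp [Complex.ext_iff]

lemma charFun'_zero (X : Ω → EuclideanSpace ℝ (Fin d)) : charFun' μ X 0 = 1 := by
  simp [charFun']

lemma charFun'_abs_le_one (X : Ω → EuclideanSpace ℝ (Fin d)) (t : EuclideanSpace ℝ (Fin d)) :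
    ‖charFun' μ X t‖ ≤ 1 := by
  have h := norm_integral_le_of_norm_le_const (μ := μ) (C := 1)
    (f := fun ω => Complex.exp (Complex.I * ((inner ℝ t (X ω) : ℝ) : ℂ)))
    (Filter.Eventually.of_forall (fun ω => by
      rw [Complex.norm_exp]; simp [Complex.mul_re]))
  simpa [charFun'] using h

omit [IsProbabilityMeasure μ] in
lemma joint_eq (X₁ X₂ : Ω → EuclideanSpace ℝ (Fin d)) (t₁ t₂ : EuclideanSpace ℝ (Fin d)) :
    jointCharFun' μ (fun ω => X₁ ω + X₂ ω) (fun ω => X₁ ω - X₂ ω) t₁ t₂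
      = ∫ ω, Complex.exp (Complex.I * ((inner ℝ (t₁ + t₂) (X₁ ω) : ℝ) : ℂ))
          * Complex.exp (Complex.I * ((inner ℝ (t₁ - t₂) (X₂ ω) : ℝ) : ℂ)) ∂μ := by
  rw [jointCharFun']
  congr 1; ext ω
  rw [← Complex.exp_add, ← mul_add]
  congr 2
  have : (inner ℝ t₁ (X₁ ω + X₂ ω) : ℝ) + (inner ℝ t₂ (X₁ ω - X₂ ω) : ℝ)
      = (inner ℝ (t₁ + t₂) (X₁ ω) : ℝ) + (inner ℝ (t₁ - t₂) (X₂ ω) : ℝ) := by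
    simp only [inner_add_right, inner_sub_right, inner_add_left, inner_sub_left]
    ring
  push_cast
  exact_mod_cast congrArg (fun r : ℝ => (r : ℂ)) this

omit [IsProbabilityMeasure μ] in
lemma charFun'_add (X₁ X₂ : Ω → EuclideanSpace ℝ (Fin d)) (t : EuclideanSpace ℝ (Fin d)) :
    charFun' μ (fun ω => X₁ ω + X₂ ω) t
      = ∫ ω, Complex.exp (Complex.I * ((inner ℝ t (X₁ ω) : ℝ) : ℂ))
          * Complex.exp (Complex.I * ((inner ℝ t (X₂ ω) : ℝ) : ℂ)) ∂μ := by
  rw [charFun']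
  congr 1; ext ω
  rw [← Complex.exp_add, ← mul_add]
  congr 2
  have : (inner ℝ t (X₁ ω + X₂ ω) : ℝ) = (inner ℝ t (X₁ ω) : ℝ) + (inner ℝ t (X₂ ω) : ℝ) :=
    inner_add_right t _ _
  push_cast [this]; ring

omit [IsProbabilityMeasure μ] in
lemma charFun'_sub (X₁ X₂ : Ω → EuclideanSpace ℝ (Fin d)) (t : EuclideanSpace ℝ (Fin d)) :
    charFun' μ (fun ω => X₁ ω - X₂ ω) t
      = ∫ ω, Complex.exp (Complex.I * ((inner ℝ t (X₁ ω) : ℝ) : ℂ))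
          * Complex.exp (Complex.I * ((inner ℝ (-t) (X₂ ω) : ℝ) : ℂ)) ∂μ := by
  rw [charFun']
  congr 1; ext ω
  rw [← Complex.exp_add, ← mul_add]
  congr 2
  have : (inner ℝ t (X₁ ω - X₂ ω) : ℝ) = (inner ℝ t (X₁ ω) : ℝ) + (inner ℝ (-t) (X₂ ω) : ℝ) := by
    simp only [inner_sub_right, inner_neg_left]
    ring
  push_cast [this]; ring

end Helpers

set_option maxHeartbeats 1000000 in
/-- Klebanov's doubling identity: if `X₁, X₂` are independent and
`X₁+X₂, X₁−X₂` are (ε,T)-dependent (in 1-norm), then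
`|f_i(2t) − f_i(t)² |f_i(t)|²| ≤ 5ε` for `‖t‖₁ ≤ T`, `i = 1,2`. -/
theorem klebanov_doubling {Ω : Type*} [MeasurableSpace Ω]
    (μ : Measure Ω) [IsProbabilityMeasure μ] {d : ℕ}
    (X₁ X₂ : Ω → EuclideanSpace ℝ (Fin d))
    (hX₁ : Measurable X₁) (hX₂ : Measurable X₂)
    (hind : IndepFun X₁ X₂ μ)
    (ε T : ℝ) (hε : 0 ≤ ε) (hT : 0 < T)
    (hdep : ∀ t₁ t₂ : EuclideanSpace ℝ (Fin d),
      (∑ i, |t₁ i|) ≤ T → (∑ i, |t₂ i|) ≤ T →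
      ‖(jointCharFun' μ (fun ω => X₁ ω + X₂ ω) (fun ω => X₁ ω - X₂ ω) t₁ t₂
          - charFun' μ (fun ω => X₁ ω + X₂ ω) t₁
            * charFun' μ (fun ω => X₁ ω - X₂ ω) t₂)‖ ≤ ε) :
    ∀ t : EuclideanSpace ℝ (Fin d), (∑ i, |t i|) ≤ T →
      ‖(charFun' μ X₁ (2 • t)
          - charFun' μ X₁ t ^ 2 * ((‖charFun' μ X₁ t‖ : ℝ) : ℂ) ^ 2)‖ ≤ 5 * ε ∧
      ‖(charFun' μ X₂ (2 • t)
          - charFun' μ X₂ t ^ 2 * ((‖charFun' μ X₂ t‖ : ℝ) : ℂ) ^ 2)‖ ≤ 5 * ε := by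
  set f := charFun' μ X₁ with hf
  set g := charFun' μ X₂ with hg
  -- rewrite hdep into explicit form
  have hdep' : ∀ t₁ t₂ : EuclideanSpace ℝ (Fin d),
      (∑ i, |t₁ i|) ≤ T → (∑ i, |t₂ i|) ≤ T →
      ‖f (t₁ + t₂) * g (t₁ - t₂)
        - f t₁ * g t₁ * (f t₂ * g (-t₂))‖ ≤ ε := by
    intro t₁ t₂ h₁ h₂
    have h := hdep t₁ t₂ h₁ h₂
    rwa [joint_eq, charFun'_add, charFun'_sub,
      indep_exp_mul' X₁ X₂ hX₁ hX₂ hind (t₁ + t₂) (t₁ - t₂),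
      indep_exp_mul' X₁ X₂ hX₁ hX₂ hind t₁ t₁,
      indep_exp_mul' X₁ X₂ hX₁ hX₂ hind t₂ (-t₂)] at h
  -- the key estimates at a point s
  have key : ∀ s : EuclideanSpace ℝ (Fin d), (∑ i, |s i|) ≤ T →
      ‖f (s + s) - f s ^ 2 * ((Complex.normSq (g s) : ℝ) : ℂ)‖ ≤ ε ∧
      ‖g (s + s) - g s ^ 2 * ((Complex.normSq (f s) : ℝ) : ℂ)‖ ≤ ε := by
    intro s hs
    have hns : (∑ i, |(-s : EuclideanSpace ℝ (Fin d)) i|) ≤ T := by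
      simpa [abs_neg] using hs
    have hgneg : g (-s) = (starRingEnd ℂ) (g s) := charFun'_neg X₂ s
    have hfneg : f (-s) = (starRingEnd ℂ) (f s) := charFun'_neg X₁ s
    have hg0 : g (s - s) = 1 := by rw [sub_self]; exact charFun'_zero X₂
    have hf0 : f (s + -s) = 1 := by rw [add_neg_cancel]; exact charFun'_zero X₁
    constructor
    · have h := hdep' s s hs hs
      have e1 : f (s + s) * g (s - s) = f (s + s) := by rw [hg0, mul_one]
      have e2 : f s * g s * (f s * g (-s)) = f s ^ 2 * ((Complex.normSq (g s) : ℝ) : ℂ) := by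
        rw [hgneg]
        have hc := Complex.mul_conj (g s)
        rw [show f s * g s * (f s * (starRingEnd ℂ) (g s))
            = f s ^ 2 * (g s * (starRingEnd ℂ) (g s)) by ring, hc]
      rwa [e1, e2] at h
    · have h := hdep' s (-s) hs hns
      have e1 : f (s + -s) * g (s - -s) = g (s + s) := by
        rw [hf0, one_mul, sub_neg_eq_add]
      have e2 : f s * g s * (f (-s) * g (-(-s))) = g s ^ 2 * ((Complex.normSq (f s) : ℝ) : ℂ) := by
        rw [neg_neg, hfneg]
        have hc := Complex.mul_conj (f s)
        rw [show f s * g s * ((starRingEnd ℂ) (f s) * g s)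
            = g s ^ 2 * (f s * (starRingEnd ℂ) (f s)) by ring, hc]
      rwa [e1, e2] at h
  -- |f t| and |g t| are close
  intro t ht
  set s : EuclideanSpace ℝ (Fin d) := (2 : ℝ)⁻¹ • t with hsdef
  have hss : s + s = t := by
    ext i
    simp [hsdef]
    ring
  have h2t : (2 : ℕ) • t = t + t := two_nsmul t
  have hsT : (∑ i, |s i|) ≤ T := by
    have : (∑ i, |s i|) = (2 : ℝ)⁻¹ * ∑ i, |t i| := by
      rw [Finset.mul_sum]
      congr 1; ext i
      simp [hsdef, abs_mul]
    rw [this]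
    have h0 : (0:ℝ) ≤ ∑ i, |t i| := Finset.sum_nonneg (fun i _ => abs_nonneg _)
    linarith
  obtain ⟨hA, hB⟩ := key s hsT
  rw [hss] at hA hB
  obtain ⟨hA2, hB2⟩ := key t ht
  set A := ‖f t‖ with hAdef
  set B := ‖g t‖ with hBdef
  set a := ‖f s‖ with hadef
  set b := ‖g s‖ with hbdef
  have hCf : ‖f s ^ 2 * ((Complex.normSq (g s) : ℝ) : ℂ)‖ = a ^ 2 * b ^ 2 := by
    rw [norm_mul, norm_pow, Complex.norm_real, Real.norm_eq_abs,
      abs_of_nonneg (Complex.normSq_nonneg _), ← Complex.sq_norm]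
  have hCg : ‖g s ^ 2 * ((Complex.normSq (f s) : ℝ) : ℂ)‖ = a ^ 2 * b ^ 2 := by
    rw [norm_mul, norm_pow, Complex.norm_real, Real.norm_eq_abs,
      abs_of_nonneg (Complex.normSq_nonneg _), ← Complex.sq_norm]
    ring
  have hA' : |A - a ^ 2 * b ^ 2| ≤ ε := by
    have h := abs_norm_sub_norm_le (f t) (f s ^ 2 * ((Complex.normSq (g s) : ℝ) : ℂ))
    rw [hCf] at h
    exact h.trans hA
  have hB' : |B - a ^ 2 * b ^ 2| ≤ ε := by
    have h := abs_norm_sub_norm_le (g t) (g s ^ 2 * ((Complex.normSq (f s) : ℝ) : ℂ))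
    rw [hCg] at h
    exact h.trans hB
  have hABle : |A - B| ≤ 2 * ε :=
    calc |A - B| ≤ |A - a ^ 2 * b ^ 2| + |a ^ 2 * b ^ 2 - B| := abs_sub_le _ _ _
      _ ≤ ε + ε := add_le_add hA' (by rwa [abs_sub_comm])
      _ = 2 * ε := by ring
  have hA1 : A ≤ 1 := charFun'_abs_le_one X₁ t
  have hB1 : B ≤ 1 := charFun'_abs_le_one X₂ t
  have hA0 : 0 ≤ A := norm_nonneg _
  have hB0 : 0 ≤ B := norm_nonneg _
  have hsq : |B ^ 2 - A ^ 2| ≤ 4 * ε := by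
    have e : B ^ 2 - A ^ 2 = (B - A) * (B + A) := by ring
    rw [e, abs_mul, abs_of_nonneg (by linarith : (0:ℝ) ≤ B + A)]
    have h1 : |B - A| ≤ 2 * ε := by rwa [abs_sub_comm] at hABle
    calc |B - A| * (B + A) ≤ (2 * ε) * 2 :=
          mul_le_mul h1 (by linarith) (by linarith) (by linarith)
      _ = 4 * ε := by ring
  have h2t' : (2 : ℕ) • t = t + t := two_nsmul t
  have hBsq : ((Complex.normSq (g t) : ℝ) : ℂ) = ((B ^ 2 : ℝ) : ℂ) := by
    rw [hBdef, Complex.sq_norm]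
  have hAsq : ((Complex.normSq (f t) : ℝ) : ℂ) = ((A ^ 2 : ℝ) : ℂ) := by
    rw [hAdef, Complex.sq_norm]
  constructor
  · have expand : f (t + t) - f t ^ 2 * ((A : ℝ) : ℂ) ^ 2
        = (f (t + t) - f t ^ 2 * ((Complex.normSq (g t) : ℝ) : ℂ))
          + f t ^ 2 * (((Complex.normSq (g t) : ℝ) : ℂ) - ((A : ℝ) : ℂ) ^ 2) := by
      ring
    rw [h2t', expand]
    have habs2 : ‖f t ^ 2 * (((Complex.normSq (g t) : ℝ) : ℂ) - ((A : ℝ) : ℂ) ^ 2)‖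
        = A ^ 2 * |B ^ 2 - A ^ 2| := by
      rw [norm_mul, norm_pow]
      congr 1
      rw [hBsq]
      rw [show ((B ^ 2 : ℝ) : ℂ) - ((A : ℝ) : ℂ) ^ 2 = ((B ^ 2 - A ^ 2 : ℝ) : ℂ) by push_cast; ring,
        Complex.norm_real, Real.norm_eq_abs]
    calc ‖_‖ ≤ ‖f (t + t) - f t ^ 2 * ((Complex.normSq (g t) : ℝ) : ℂ)‖
          + ‖f t ^ 2 * (((Complex.normSq (g t) : ℝ) : ℂ) - ((A : ℝ) : ℂ) ^ 2)‖ :=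
          norm_add_le _ _
      _ ≤ ε + A ^ 2 * |B ^ 2 - A ^ 2| := by rw [habs2]; exact add_le_add_left hA2 _
      _ ≤ ε + 1 * (4 * ε) := by
          refine add_le_add_right ?_ ε
          have hAsq1 : A ^ 2 ≤ 1 := by nlinarith
          exact mul_le_mul hAsq1 hsq (abs_nonneg _) (by norm_num)
      _ = 5 * ε := by ring
  · have expand : g (t + t) - g t ^ 2 * ((B : ℝ) : ℂ) ^ 2
        = (g (t + t) - g t ^ 2 * ((Complex.normSq (f t) : ℝ) : ℂ))
          + g t ^ 2 * (((Complex.normSq (f t) : ℝ) : ℂ) - ((B : ℝ) : ℂ) ^ 2) := by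
      ring
    rw [h2t', expand]
    have habs2 : ‖g t ^ 2 * (((Complex.normSq (f t) : ℝ) : ℂ) - ((B : ℝ) : ℂ) ^ 2)‖
        = B ^ 2 * |A ^ 2 - B ^ 2| := by
      rw [norm_mul, norm_pow]
      congr 1
      rw [hAsq]
      rw [show ((A ^ 2 : ℝ) : ℂ) - ((B : ℝ) : ℂ) ^ 2 = ((A ^ 2 - B ^ 2 : ℝ) : ℂ) by push_cast; ring,
        Complex.norm_real, Real.norm_eq_abs]
    have hsq' : |A ^ 2 - B ^ 2| ≤ 4 * ε := by rwa [abs_sub_comm] at hsq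
    calc ‖_‖ ≤ ‖g (t + t) - g t ^ 2 * ((Complex.normSq (f t) : ℝ) : ℂ)‖
          + ‖g t ^ 2 * (((Complex.normSq (f t) : ℝ) : ℂ) - ((B : ℝ) : ℂ) ^ 2)‖ :=
          norm_add_le _ _
      _ ≤ ε + B ^ 2 * |A ^ 2 - B ^ 2| := by rw [habs2]; exact add_le_add_left hB2 _
      _ ≤ ε + 1 * (4 * ε) := by
          refine add_le_add_right ?_ ε
          have hBsq1 : B ^ 2 ≤ 1 := by nlinarith
          exact mul_le_mul hBsq1 hsq' (abs_nonneg _) (by norm_num)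
      _ = 5 * ε := by ring
end

section
/- Let Y_p, Y_q be ℝ^d-valued random vectors with densities p, q and finite second moments, and suppose |p(y) − q(y)| ≤ B for all y and some B > 0. Then ∫ |p(y) − q(y)| dy ≤ 4 T^d B + 2d E[‖Y_p‖₁²]/T² for every T > 0; in particular, choosing T = B^{−1/(d+3)}, the L¹ distance is at most 4 B^{3/(d+3)} + 2d E[‖Y_p‖₁²] B^{2/(d+3)}. -/
open MeasureTheory

lemma two_pow_le_two_mul_factorial (d : ℕ) : (2:ℝ) ^ d ≤ 2 * (Nat.factorial d : ℝ) := by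
  induction d with
  | zero => norm_num
  | succ n ih =>
    rcases Nat.eq_zero_or_pos n with h | h
    · subst h; norm_num
    · have h2 : (2:ℝ) ≤ (n:ℝ) + 1 := by exact_mod_cast Nat.succ_le_succ h
      have hfac : (0:ℝ) ≤ (Nat.factorial n : ℝ) := by positivity
      have : (Nat.factorial (n+1) : ℝ) = ((n:ℝ) + 1) * (Nat.factorial n : ℝ) := by
        rw [Nat.factorial_succ]; push_cast; ring
      calc (2:ℝ) ^ (n+1) = 2 * 2 ^ n := by ring
        _ ≤ 2 * (2 * (Nat.factorial n : ℝ)) := by linarith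
        _ ≤ 2 * (((n:ℝ) + 1) * (Nat.factorial n : ℝ)) := by nlinarith
        _ = 2 * (Nat.factorial (n+1) : ℝ) := by rw [this]

lemma vol_l1ball_le (d : ℕ) (T : ℝ) (hT : 0 < T) :
    volume {y : Fin d → ℝ | ∑ i, |y i| ≤ T} ≤ ENNReal.ofReal (2 * T ^ d) := by
  rcases Nat.eq_zero_or_pos d with hd | hd
  · subst hd
    have hset : {y : Fin 0 → ℝ | ∑ i, |y i| ≤ T} = Set.univ := by
      ext y; simp [hT.le]
    rw [hset, MeasureTheory.volume_pi, Measure.pi_univ]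
    simp only [Finset.univ_eq_empty, Finset.prod_empty, pow_zero, mul_one]
    exact ENNReal.one_le_ofReal.mpr (by norm_num)
  · haveI : Nonempty (Fin d) := Fin.pos_iff_nonempty.mp hd
    have key := MeasureTheory.volume_sum_rpow_le (Fin d) (le_refl (1:ℝ)) T
    simp only [Real.rpow_one, one_div_one, Fintype.card_fin, div_one] at key
    have hG2 : Real.Gamma (1 + 1) = 1 := by
      rw [show (1:ℝ) + 1 = 2 by norm_num, Real.Gamma_two]
    have hGd : Real.Gamma ((d:ℝ) + 1) = (Nat.factorial d : ℝ) := Real.Gamma_nat_eq_factorial d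
    rw [hG2, hGd, mul_one] at key
    rw [key, ← ENNReal.ofReal_pow hT.le, ← ENNReal.ofReal_mul (by positivity)]
    apply ENNReal.ofReal_le_ofReal
    have hfac : (0:ℝ) < (Nat.factorial d : ℝ) := by positivity
    have h2 : (2:ℝ) ^ d / (Nat.factorial d : ℝ) ≤ 2 := by
      rw [div_le_iff₀ hfac]
      exact two_pow_le_two_mul_factorial d
    have hTd : (0:ℝ) ≤ T ^ d := by positivity
    nlinarith

/-- Pointwise-to-L¹ bound: if densities `p, q` on ℝ^d with finite second
moments satisfy `|p(y) − q(y)| ≤ B` pointwise, then for every `T > 0`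
`∫|p−q| ≤ 4 T^d B + 2d E[‖Y_p‖₁²]/T²`; in particular, with
`T = B^{−1/(d+3)}`, `∫|p−q| ≤ 4 B^{3/(d+3)} + 2d E[‖Y_p‖₁²] B^{2/(d+3)}`. -/
theorem pointwise_pdf_to_L1 (d : ℕ) (p q : (Fin d → ℝ) → ℝ)
    (hp : Measurable p) (hq : Measurable q)
    (hp0 : ∀ y, 0 ≤ p y) (hq0 : ∀ y, 0 ≤ q y)
    (hpint : ∫ y, p y = 1) (hqint : ∫ y, q y = 1)
    (hmomp : Integrable (fun y => (∑ i, |y i|) ^ 2 * p y))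
    (hmomq : Integrable (fun y => (∑ i, |y i|) ^ 2 * q y))
    (B : ℝ) (hB : 0 < B) (hpq : ∀ y, |p y - q y| ≤ B) :
    (∀ T : ℝ, 0 < T →
      (∫ y, |p y - q y|)
        ≤ 4 * T ^ d * B + 2 * d * (∫ y, (∑ i, |y i|) ^ 2 * p y) / T ^ 2) ∧
    (∫ y, |p y - q y|)
      ≤ 4 * B ^ ((3 : ℝ) / (d + 3))
        + 2 * d * (∫ y, (∑ i, |y i|) ^ 2 * p y) * B ^ ((2 : ℝ) / (d + 3)) := by
  set Mp := ∫ y, (∑ i, |y i|) ^ 2 * p y with hMpdef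
  have hMp0 : 0 ≤ Mp := integral_nonneg fun y => mul_nonneg (by positivity) (hp0 y)
  clear_value Mp
  have hIp : Integrable p := by
    by_contra h
    rw [integral_undef h] at hpint; norm_num at hpint
  have hIq : Integrable q := by
    by_contra h
    rw [integral_undef h] at hqint; norm_num at hqint
  have hIpq : Integrable (fun y => |p y - q y|) := (hIp.sub hIq).abs
  have key : ∀ T : ℝ, 0 < T →
      (∫ y, |p y - q y|) ≤ 4 * T ^ d * B + 2 * d * Mp / T ^ 2 := by
    intro T hT
    set S : Set (Fin d → ℝ) := {y | ∑ i, |y i| ≤ T} with hSdef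
    have hsum_meas : Measurable fun y : Fin d → ℝ => ∑ i, |y i| := by
      apply Finset.measurable_sum
      intro i _
      exact (measurable_pi_apply i).abs
    have hSm : MeasurableSet S := measurableSet_le hsum_meas measurable_const
    have hvolE := vol_l1ball_le d T hT
    have hfin : volume S < ⊤ := lt_of_le_of_lt hvolE ENNReal.ofReal_lt_top
    have hvolR : (volume S).toReal ≤ 2 * T ^ d :=
      ENNReal.toReal_le_of_le_ofReal (by positivity) hvolE
    have hA : (∫ y in S, |p y - q y|) ≤ B * (volume S).toReal := by
      have hnm := norm_setIntegral_le_of_norm_le_const (f := fun y => |p y - q y|)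
        hfin (C := B) (fun x _ => by rw [Real.norm_eq_abs, abs_abs]; exact hpq x)
      exact (le_abs_self _).trans hnm
    have hB2 : (∫ y in Sᶜ, p y) ≤ Mp / T ^ 2 := by
      have h1 : (∫ y in Sᶜ, p y) ≤ ∫ y in Sᶜ, ((∑ i, |y i|) ^ 2 * p y) / T ^ 2 := by
        apply setIntegral_mono_on hIp.integrableOn
          ((hmomp.div_const _).integrableOn) hSm.compl
        intro y hy
        have hy' : T < ∑ i, |y i| := not_le.mp hy
        rw [le_div_iff₀ (by positivity : (0:ℝ) < T ^ 2)]
        nlinarith [mul_le_mul_of_nonneg_left (pow_le_pow_left₀ hT.le hy'.le 2) (hp0 y), hp0 y]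
      have h2 : (∫ y in Sᶜ, ((∑ i, |y i|) ^ 2 * p y) / T ^ 2)
          = (∫ y in Sᶜ, (∑ i, |y i|) ^ 2 * p y) / T ^ 2 := integral_div _ _
      have h3 : (∫ y in Sᶜ, (∑ i, |y i|) ^ 2 * p y) ≤ Mp := by
        rw [hMpdef]
        exact setIntegral_le_integral hmomp
          (Filter.Eventually.of_forall fun y => mul_nonneg (by positivity) (hp0 y))
      calc (∫ y in Sᶜ, p y) ≤ _ := h1
        _ = (∫ y in Sᶜ, (∑ i, |y i|) ^ 2 * p y) / T ^ 2 := h2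
        _ ≤ Mp / T ^ 2 := by gcongr
    have hsplit_p : (∫ y in S, p y) + (∫ y in Sᶜ, p y) = 1 := by
      rw [integral_add_compl hSm hIp, hpint]
    have hsplit_q : (∫ y in S, q y) + (∫ y in Sᶜ, q y) = 1 := by
      rw [integral_add_compl hSm hIq, hqint]
    have hC : (∫ y in Sᶜ, q y) ≤ (∫ y in Sᶜ, p y) + B * (volume S).toReal := by
      have hdiff : (∫ y in S, p y) - (∫ y in S, q y) ≤ ∫ y in S, |p y - q y| := by
        rw [← integral_sub hIp.integrableOn hIq.integrableOn]
        apply setIntegral_mono_on (hIp.integrableOn.sub hIq.integrableOn)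
          hIpq.integrableOn hSm
        intro y _; exact le_abs_self _
      linarith
    have hD : (∫ y in Sᶜ, |p y - q y|) ≤ (∫ y in Sᶜ, p y) + (∫ y in Sᶜ, q y) := by
      rw [← integral_add hIp.integrableOn hIq.integrableOn]
      apply setIntegral_mono_on hIpq.integrableOn
        (hIp.integrableOn.add hIq.integrableOn) hSm.compl
      intro y _
      simp only [Pi.add_apply]
      rw [abs_sub_le_iff]
      constructor <;> linarith [hp0 y, hq0 y]
    have htotal : (∫ y, |p y - q y|)
        = (∫ y in S, |p y - q y|) + (∫ y in Sᶜ, |p y - q y|) :=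
      (integral_add_compl hSm hIpq).symm
    have hBvol : B * (volume S).toReal ≤ B * (2 * T ^ d) :=
      mul_le_mul_of_nonneg_left hvolR hB.le
    have hMp_d : 2 * Mp / T ^ 2 ≤ 2 * d * Mp / T ^ 2 := by
      rcases Nat.eq_zero_or_pos d with h0 | h0
      · have hMpz : Mp = 0 := by
          rw [hMpdef]
          subst h0
          simp
        rw [hMpz]; simp
      · have hd1 : (1:ℝ) ≤ (d:ℝ) := by exact_mod_cast h0
        gcongr ?_ / T ^ 2
        nlinarith
    have step : (∫ y, |p y - q y|) ≤ 2 * (B * (2 * T ^ d)) + 2 * (Mp / T ^ 2) := by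
      linarith
    calc (∫ y, |p y - q y|) ≤ 2 * (B * (2 * T ^ d)) + 2 * (Mp / T ^ 2) := step
      _ = 4 * T ^ d * B + 2 * Mp / T ^ 2 := by ring
      _ ≤ 4 * T ^ d * B + 2 * d * Mp / T ^ 2 := add_le_add_right hMp_d _
  refine ⟨key, ?_⟩
  set T : ℝ := B ^ (-(1:ℝ)/((d:ℝ)+3)) with hTdef
  have hT : 0 < T := Real.rpow_pos_of_pos hB _
  have h := key T hT
  have hd3 : ((d:ℝ) + 3) ≠ 0 := by positivity
  have e1 : T ^ d = B ^ ((-(1:ℝ)/((d:ℝ)+3)) * d) := by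
    rw [hTdef, ← Real.rpow_natCast (B ^ (-(1:ℝ)/((d:ℝ)+3))) d, ← Real.rpow_mul hB.le]
  have e2 : T ^ 2 = B ^ ((-(1:ℝ)/((d:ℝ)+3)) * 2) := by
    rw [hTdef, ← Real.rpow_natCast (B ^ (-(1:ℝ)/((d:ℝ)+3))) 2, ← Real.rpow_mul hB.le]
    norm_num
  have hexp : (-(1:ℝ)/((d:ℝ)+3)) * d + 1 = 3/((d:ℝ)+3) := by
    field_simp
    ring
  have e3 : 4 * T ^ d * B = 4 * B ^ ((3:ℝ)/((d:ℝ)+3)) := by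
    rw [e1, mul_assoc, ← Real.rpow_add_one hB.ne', hexp]
  have e4 : 2 * d * Mp / T ^ 2 = 2 * d * Mp * B ^ ((2:ℝ)/((d:ℝ)+3)) := by
    rw [e2, show (-(1:ℝ)/((d:ℝ)+3)) * 2 = -((2:ℝ)/((d:ℝ)+3)) by ring,
      Real.rpow_neg hB.le, div_eq_mul_inv, inv_inv]
  rw [e3, e4] at h
  exact h
end
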